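/- Let m > 0. The function v₀(r) = √(2r/m)·(1 − ((2r − m)/(2r + m))·log √(2r/m)) has exactly one zero in (m/2, ∞), namely the unique R > m/2 with log √(2R/m) = (2R + m)/(2R − m). -/

import Mathlib

open Real Set

theorem radial_jacobi_field_unique_zero (m : ℝ) (hm : 0 < m) :
    let v : ℝ → ℝ := fun r =>
      Real.sqrt (2 * r / m) *
        (1 - (2 * r - m) / (2 * r + m) * Real.log (Real.sqrt (2 * r / m)))
    (∃! R : ℝ, m / 2 < R ∧ v R = 0) ∧
      ∀ R : ℝ, m / 2 < R →
        (v R = 0 ↔ Real.log (Real.sqrt (2 * R / m)) = (2 * R + m) / (2 * R - m)) := by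
  intro v
  set f : ℝ → ℝ := fun r => Real.log (2 * r / m) / 2 - (2 * r + m) / (2 * r - m) with hf
  -- basic facts for R in the range
  have hfacts : ∀ R : ℝ, m / 2 < R → 0 < R ∧ 0 < 2 * R - m ∧ 0 < 2 * R + m ∧ 0 < 2 * R / m := by
    intro R hR
    have h0 : 0 < R := by linarith
    refine ⟨h0, by linarith, by linarith, by positivity⟩
  have hlogsqrt : ∀ R : ℝ, m / 2 < R →
      Real.log (Real.sqrt (2 * R / m)) = Real.log (2 * R / m) / 2 := by
    intro R hR
    exact Real.log_sqrt (le_of_lt (hfacts R hR).2.2.2)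
  have key2 : ∀ R : ℝ, m / 2 < R →
      (Real.log (Real.sqrt (2 * R / m)) = (2 * R + m) / (2 * R - m) ↔ f R = 0) := by
    intro R hR
    rw [hlogsqrt R hR]
    simp only [hf, sub_eq_zero]
  have key : ∀ R : ℝ, m / 2 < R → (v R = 0 ↔ f R = 0) := by
    intro R hR
    obtain ⟨hR0, h1, h2, h3⟩ := hfacts R hR
    have hs : Real.sqrt (2 * R / m) ≠ 0 := by positivity
    have : v R = 0 ↔
        1 - (2 * R - m) / (2 * R + m) * (Real.log (2 * R / m) / 2) = 0 := by
      rw [show v R = _ * _ from rfl, mul_eq_zero, hlogsqrt R hR]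
      simp [hs]
    rw [this, hf]
    have h1' : (2 * R - m) ≠ 0 := ne_of_gt h1
    have h2' : (2 * R + m) ≠ 0 := ne_of_gt h2
    set L := Real.log (2 * R / m)
    rw [sub_eq_zero, sub_eq_zero, eq_comm, div_mul_eq_mul_div, div_eq_one_iff_eq h2',
      eq_div_iff h1']
    constructor <;> intro h <;> nlinarith [h]
  -- derivative of f
  have hd : ∀ x ∈ Ioi (m / 2), HasDerivAt f (1 / (2 * x) + 4 * m / (2 * x - m) ^ 2) x := by
    intro x hx
    simp only [mem_Ioi] at hx
    obtain ⟨hx0, h1, h2, h3⟩ := hfacts x hx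
    have hinner : HasDerivAt (fun r : ℝ => 2 * r / m) (2 / m) x := by
      simpa using ((hasDerivAt_id x).const_mul 2).div_const m
    have hlog : HasDerivAt (fun r : ℝ => Real.log (2 * r / m)) ((2 * x / m)⁻¹ * (2 / m)) x :=
      (Real.hasDerivAt_log (ne_of_gt h3)).comp (h₂ := Real.log) x hinner
    have hnum : HasDerivAt (fun r : ℝ => 2 * r + m) 2 x := by
      simpa using ((hasDerivAt_id x).const_mul 2).add_const m
    have hden : HasDerivAt (fun r : ℝ => 2 * r - m) 2 x := by
      simpa using ((hasDerivAt_id x).const_mul 2).sub_const m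
    have hq : HasDerivAt (fun r : ℝ => (2 * r + m) / (2 * r - m))
        ((2 * (2 * x - m) - (2 * x + m) * 2) / (2 * x - m) ^ 2) x :=
      hnum.div hden (ne_of_gt h1)
    have := (hlog.div_const 2).sub hq
    refine this.congr_deriv ?_
    field_simp
    ring
  have hcont : ContinuousOn f (Ioi (m / 2)) := fun x hx =>
    ((hd x hx).continuousAt).continuousWithinAt
  have hmono : StrictMonoOn f (Ioi (m / 2)) := by
    apply strictMonoOn_of_deriv_pos (convex_Ioi _) hcont
    rw [interior_Ioi]
    intro x hx
    rw [(hd x hx).deriv]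
    simp only [mem_Ioi] at hx
    obtain ⟨hx0, h1, h2, h3⟩ := hfacts x hx
    have : (0:ℝ) < (2 * x - m) ^ 2 := pow_pos h1 2
    positivity
  -- endpoints
  have hmmem : m ∈ Ioi (m / 2) := by simp [mem_Ioi]; linarith
  have hfm : f m < 0 := by
    have e1 : 2 * m / m = 2 := by field_simp
    have e2 : (2 * m + m) / (2 * m - m) = 3 := by
      rw [show 2 * m + m = 3 * m by ring, show 2 * m - m = m by ring]
      field_simp
    simp only [hf, e1, e2]
    have := Real.log_two_lt_d9
    linarith
  set b : ℝ := m / 2 * Real.exp 20 with hb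
  have hexp : (21:ℝ) ≤ Real.exp 20 := by
    have := Real.add_one_le_exp (20:ℝ)
    linarith
  have hmb : m < b := by
    rw [hb]; nlinarith
  have hbmem : b ∈ Ioi (m / 2) := by simp only [mem_Ioi]; linarith
  have hfb : 0 < f b := by
    have e1 : 2 * b / m = Real.exp 20 := by rw [hb]; field_simp
    have e2 : (2 * b + m) / (2 * b - m) ≤ 2 := by
      rw [hb]
      have h1 : 0 < 2 * (m / 2 * Real.exp 20) - m := by nlinarith
      rw [div_le_iff₀ h1]
      nlinarith
    simp only [hf, e1, Real.log_exp]
    linarith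
  -- existence via IVT
  have hconticc : ContinuousOn f (Icc m b) := hcont.mono (fun x hx => by
    simp only [mem_Ioi]; have := hx.1; linarith)
  have := intermediate_value_Ioo (le_of_lt hmb) hconticc
  have h0mem : (0:ℝ) ∈ Ioo (f m) (f b) := ⟨hfm, hfb⟩
  obtain ⟨R, hRmem, hR0⟩ := this h0mem
  have hRgt : m / 2 < R := by have := hRmem.1; linarith
  constructor
  · refine ⟨R, ⟨hRgt, (key R hRgt).2 hR0⟩, ?_⟩
    rintro y ⟨hy, hvy⟩
    have hy0 : f y = 0 := (key y hy).1 hvy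
    exact hmono.injOn (mem_Ioi.2 hy) (mem_Ioi.2 hRgt) (by rw [hy0, hR0])
  · intro R' hR'
    exact (key R' hR').trans (key2 R' hR').symm
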